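/- Let k ≥ 3 and G = C(3k+1; {1,2,4}). Then the independence number of G is at most k−1. -/

import Mathlib

open SimpleGraph

def circGraph (n : ℕ) (s : Set (ZMod n)) : SimpleGraph (ZMod n) where
  Adj i j := i ≠ j ∧ (i - j ∈ s ∨ j - i ∈ s)
  symm := ⟨fun i j h => ⟨h.1.symm, h.2.symm⟩⟩
  loopless := ⟨fun i h => h.1 rfl⟩

/-- Number of connected components of `G - S`. -/
noncomputable def numComp {V : Type*} (G : SimpleGraph V) (S : Set V) : ℕ :=
  Nat.card ((G.induce Sᶜ).ConnectedComponent)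

/-- `S` is a vertex cut: removing `S` leaves a disconnected graph. -/
def IsVertexCut {V : Type*} (G : SimpleGraph V) (S : Set V) : Prop :=
  1 < numComp G S

/-- Toughness: minimum of |S| / c(G - S) over vertex cuts `S`. -/
noncomputable def toughness {V : Type*} (G : SimpleGraph V) : ℝ :=
  sInf {x : ℝ | ∃ S : Set V, IsVertexCut G S ∧ x = (S.ncard : ℝ) / (numComp G S : ℝ)}

def MinimallyTough {V : Type*} (G : SimpleGraph V) (t : ℝ) : Prop :=
  toughness G = t ∧ ∀ e ∈ G.edgeSet, toughness (G.deleteEdges {e}) < t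

theorem stmt10 (k : ℕ) (hk : 3 ≤ k) (I : Set (ZMod (3*k+1)))
    (hI : ∀ u ∈ I, ∀ v ∈ I, ¬ (circGraph (3*k+1) {1, 2, 4}).Adj u v) :
    I.ncard ≤ k - 1 := by
  classical
  haveI hne : NeZero (3*k+1) := ⟨by omega⟩
  have hcast0 : ∀ a : ℕ, 0 < a → a < 3*k+1 → ((a : ZMod (3*k+1)) ≠ 0) := by
    intro a h1 h2 h
    rw [ZMod.natCast_eq_zero_iff] at h
    have := Nat.le_of_dvd h1 h
    omega
  have h1ne : (1 : ZMod (3*k+1)) ≠ 0 := by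
    have := hcast0 1 (by omega) (by omega); simpa using this
  have h2ne : (2 : ZMod (3*k+1)) ≠ 0 := by
    have := hcast0 2 (by omega) (by omega); simpa using this
  have h4ne : (4 : ZMod (3*k+1)) ≠ 0 := by
    have := hcast0 4 (by omega) (by omega); simpa using this
  -- nonadjacency in usable form
  have hNA : ∀ v ∈ I, ∀ w ∈ I, v ≠ w →
      v - w ≠ 1 ∧ v - w ≠ 2 ∧ v - w ≠ 4 := by
    intro v hv w hw hvw
    have h := hI v hv w hw
    simp only [circGraph, Set.mem_insert_iff, Set.mem_singleton_iff] at h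
    push_neg at h
    exact (h hvw).1
  have hD : ∀ v ∈ I, ∀ w ∈ I, ∀ c : ZMod (3*k+1), c ≠ 0 →
      (c = 1 ∨ c = 2 ∨ c = 4) → v - w ≠ c := by
    intro v hv w hw c hc0 hc h
    have hvw : v ≠ w := by
      intro e; rw [e, sub_self] at h; exact hc0 h.symm
    obtain ⟨e1, e2, e4⟩ := hNA v hv w hw hvw
    rcases hc with rfl | rfl | rfl
    · exact e1 h
    · exact e2 h
    · exact e4 h
  have hfin : I.Finite := Set.toFinite I
  set T : Finset (ZMod (3*k+1)) := hfin.toFinset with hT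
  have hTI : ∀ {v}, v ∈ T → v ∈ I := fun h => (Set.Finite.mem_toFinset hfin).mp h
  have hTc : I.ncard = T.card := Set.ncard_eq_toFinset_card I hfin
  -- blocks of length 3 are disjoint
  have hblk : ∀ v ∈ I, ∀ w ∈ I, ∀ a b : ℕ, a < 3 → b < 3 →
      v + (a : ZMod (3*k+1)) = w + (b : ZMod (3*k+1)) → v = w ∧ a = b := by
    intro v hv w hw a b ha hb h
    rcases lt_trichotomy a b with hab | rfl | hab
    · exfalso
      have h' : v - w = ((b - a : ℕ) : ZMod (3*k+1)) := by
        have hle : a ≤ b := le_of_lt hab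
        push_cast [hle]
        linear_combination h
      have hcases : b - a = 1 ∨ b - a = 2 := by omega
      rcases hcases with e | e <;> rw [e] at h'
      · exact hD v hv w hw 1 h1ne (Or.inl rfl) (by simpa using h')
      · exact hD v hv w hw 2 h2ne (Or.inr (Or.inl rfl)) (by simpa using h')
    · exact ⟨add_right_cancel h, rfl⟩
    · exfalso
      have h' : w - v = ((a - b : ℕ) : ZMod (3*k+1)) := by
        have hle : b ≤ a := le_of_lt hab
        push_cast [hle]
        linear_combination -h
      have hcases : a - b = 1 ∨ a - b = 2 := by omega
      rcases hcases with e | e <;> rw [e] at h'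
      · exact hD w hw v hv 1 h1ne (Or.inl rfl) (by simpa using h')
      · exact hD w hw v hv 2 h2ne (Or.inr (Or.inl rfl)) (by simpa using h')
  set f : ZMod (3*k+1) × Fin 3 → ZMod (3*k+1) :=
    fun p => p.1 + ((p.2 : ℕ) : ZMod (3*k+1)) with hf
  set P : Finset (ZMod (3*k+1) × Fin 3) := T ×ˢ Finset.univ with hP
  have hinj : Set.InjOn f ↑P := by
    rintro ⟨v, i⟩ hvi ⟨w, j⟩ hwj heq
    have h1 := Finset.mem_product.mp (Finset.mem_coe.mp hvi)
    have h2 := Finset.mem_product.mp (Finset.mem_coe.mp hwj)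
    simp only [hf] at heq
    obtain ⟨hvw, hij⟩ := hblk v (hTI h1.1) w (hTI h2.1) i j i.isLt j.isLt heq
    exact Prod.ext hvw (Fin.ext hij)
  have hcard1 : P.card = T.card * 3 := by
    rw [hP, Finset.card_product]
    simp
  have hcardZ : Fintype.card (ZMod (3*k+1)) = 3*k+1 := ZMod.card _
  have hle : P.card ≤ 3*k+1 := by
    have := Finset.card_le_card_of_injOn f (fun a _ => Finset.mem_univ (f a)) hinj
    rwa [Finset.card_univ, hcardZ] at this
  have hTk : T.card ≤ k := by omega
  rw [hTc]
  by_contra hcon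
  push_neg at hcon
  have hTk' : T.card = k := by omega
  -- the uncovered vertex u
  set U : Finset (ZMod (3*k+1)) := P.image f with hU
  have hUcard : U.card = 3 * k := by
    rw [hU, Finset.card_image_of_injOn hinj, hcard1, hTk']; ring
  have hcompl : (Finset.univ \ U).card = 1 := by
    rw [Finset.card_sdiff_of_subset (Finset.subset_univ U), Finset.card_univ, hcardZ, hUcard]
    omega
  obtain ⟨u, hu⟩ := Finset.card_eq_one.mp hcompl
  have huU : u ∉ U := by
    have : u ∈ Finset.univ \ U := by rw [hu]; exact Finset.mem_singleton_self u
    exact (Finset.mem_sdiff.mp this).2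
  have hout : ∀ x, x ∉ U → x = u := by
    intro x hx
    have : x ∈ Finset.univ \ U := Finset.mem_sdiff.mpr ⟨Finset.mem_univ x, hx⟩
    rw [hu] at this
    exact Finset.mem_singleton.mp this
  have hmemU : ∀ v ∈ T, ∀ a : ℕ, (ha : a < 3) → v + (a : ZMod (3*k+1)) ∈ U := by
    intro v hv a ha
    rw [hU]
    exact Finset.mem_image.mpr
      ⟨(v, ⟨a, ha⟩), Finset.mem_product.mpr ⟨hv, Finset.mem_univ _⟩, by simp [hf]⟩
  -- the step: from a vertex of I, adding 3 stays in I or hits u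
  have hstep : ∀ v ∈ T, v + 3 ∈ T ∨ v + 3 = u := by
    intro v hv
    by_cases h : v + 3 ∈ U
    · left
      rw [hU] at h
      obtain ⟨⟨w, i⟩, hwi, heq⟩ := Finset.mem_image.mp h
      have hw : w ∈ T := (Finset.mem_product.mp hwi).1
      have hv' : v ∈ I := hTI hv
      have hw' : w ∈ I := hTI hw
      simp only [hf] at heq
      fin_cases i
      · have e : w = v + 3 := by simpa using heq
        rwa [← e]
      · exfalso
        have e : w - v = 2 := by
          push_cast at heq
          linear_combination heq
        exact hD w hw' v hv' 2 h2ne (Or.inr (Or.inl rfl)) e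
      · exfalso
        have e : w - v = 1 := by
          push_cast at heq
          linear_combination heq
        exact hD w hw' v hv' 1 h1ne (Or.inl rfl) e
    · right
      exact hout _ h
  have hchain : ∀ m : ℕ, ∀ v ∈ T,
      (∀ j : ℕ, 1 ≤ j → j ≤ m → v + ((3*j : ℕ) : ZMod (3*k+1)) ≠ u) →
      v + ((3*m : ℕ) : ZMod (3*k+1)) ∈ T := by
    intro m
    induction m with
    | zero => intro v hv _; simpa using hv
    | succ m ih =>
      intro v hv hj
      have h1 : v + ((3*m : ℕ) : ZMod (3*k+1)) ∈ T :=
        ih v hv (fun j a b => hj j a (by omega))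
      rcases hstep _ h1 with h | h
      · have e : v + ((3*m : ℕ) : ZMod (3*k+1)) + 3
            = v + ((3*(m+1) : ℕ) : ZMod (3*k+1)) := by push_cast; ring
        rwa [e] at h
      · exfalso
        apply hj (m+1) (by omega) le_rfl
        rw [← h]; push_cast; ring
  -- 3 is a unit
  have hco : Nat.Coprime 3 (3*k+1) := by
    have h1 : (3*k+1) % 3 = 1 := by omega
    show Nat.gcd 3 (3*k+1) = 1
    rw [Nat.gcd_rec, h1, Nat.gcd_one_left]
  have hunit : IsUnit ((3 : ℕ) : ZMod (3*k+1)) :=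
    (ZMod.isUnit_iff_coprime 3 (3*k+1)).mpr hco
  obtain ⟨z, hz⟩ := hunit
  -- every vertex of I is u - 3*d for some 1 ≤ d ≤ k
  have hrep : ∀ v ∈ T, ∃ d : ℕ, 1 ≤ d ∧ d ≤ k ∧
      v + ((3*d : ℕ) : ZMod (3*k+1)) = u := by
    intro v hv
    have hvu : v ≠ u := by
      intro e
      apply huU
      have h0 := hmemU v hv 0 (by omega)
      rw [← e]
      simpa using h0
    set x : ZMod (3*k+1) := (↑z⁻¹ : ZMod (3*k+1)) * (u - v) with hx
    have h3x : ((3 : ℕ) : ZMod (3*k+1)) * x = u - v := by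
      rw [hx, ← hz, ← mul_assoc, Units.mul_inv, one_mul]
    have hx0 : x ≠ 0 := by
      intro e
      have h0 : u - v = 0 := by rw [← h3x, e, mul_zero]
      exact hvu (sub_eq_zero.mp h0).symm
    have hxval : 1 ≤ x.val := Nat.one_le_iff_ne_zero.mpr
      (fun e => hx0 ((ZMod.val_eq_zero x).mp e))
    have hxvlt : x.val < 3*k+1 := ZMod.val_lt x
    have hQspec : v + ((3*(x.val - 1 + 1) : ℕ) : ZMod (3*k+1)) = u := by
      have e : (3*(x.val - 1 + 1) : ℕ) = 3 * x.val := by omega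
      rw [e]
      push_cast [ZMod.natCast_zmod_val]
      push_cast at h3x
      linear_combination h3x
    have hQ : ∃ j : ℕ, v + ((3*(j+1) : ℕ) : ZMod (3*k+1)) = u := ⟨x.val - 1, hQspec⟩
    have hdle : Nat.find hQ + 1 ≤ x.val := by
      have := Nat.find_min' hQ hQspec
      omega
    have hmemT : ∀ m : ℕ, m < Nat.find hQ + 1 →
        v + ((3*m : ℕ) : ZMod (3*k+1)) ∈ T := by
      intro m hm
      apply hchain m v hv
      intro j hj1 hj2 hju
      have hmin := Nat.find_min hQ (show j - 1 < Nat.find hQ by omega)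
      apply hmin
      have e : 3*(j-1+1) = 3*j := by omega
      rw [e]
      exact hju
    have hcardle : Nat.find hQ + 1 ≤ T.card := by
      have hs : ∀ m ∈ Finset.range (Nat.find hQ + 1),
          (fun m : ℕ => v + ((3*m : ℕ) : ZMod (3*k+1))) m ∈ T := by
        intro m hm
        exact hmemT m (Finset.mem_range.mp hm)
      have hinj2 : Set.InjOn (fun m : ℕ => v + ((3*m : ℕ) : ZMod (3*k+1)))
          ↑(Finset.range (Nat.find hQ + 1)) := by
        intro a ha b hb hab
        have ha' : a < Nat.find hQ + 1 := Finset.mem_range.mp (Finset.mem_coe.mp ha)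
        have hb' : b < Nat.find hQ + 1 := Finset.mem_range.mp (Finset.mem_coe.mp hb)
        have h3 : ((3*a : ℕ) : ZMod (3*k+1)) = ((3*b : ℕ) : ZMod (3*k+1)) :=
          add_left_cancel hab
        rw [ZMod.natCast_eq_natCast_iff] at h3
        have h4 : a ≡ b [MOD 3*k+1] :=
          Nat.ModEq.cancel_left_of_coprime (by simpa [Nat.coprime_comm] using hco) h3
        have h5 : a % (3*k+1) = b % (3*k+1) := h4
        rw [Nat.mod_eq_of_lt (by omega), Nat.mod_eq_of_lt (by omega)] at h5
        exact h5
      have := Finset.card_le_card_of_injOn _ hs hinj2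
      simpa using this
    exact ⟨Nat.find hQ + 1, by omega, by omega, Nat.find_spec hQ⟩
  -- hence I = {u - 3j : 1 ≤ j ≤ k}
  set S : Finset (ZMod (3*k+1)) :=
    (Finset.Icc 1 k).image (fun j : ℕ => u - ((3*j : ℕ) : ZMod (3*k+1))) with hS
  have hsub : T ⊆ S := by
    intro v hv
    obtain ⟨d, hd1, hdk, hdu⟩ := hrep v hv
    rw [hS]
    refine Finset.mem_image.mpr ⟨d, Finset.mem_Icc.mpr ⟨hd1, hdk⟩, ?_⟩
    rw [← hdu]
    ring
  have hScard : S.card ≤ k := by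
    calc S.card ≤ (Finset.Icc 1 k).card := Finset.card_image_le
    _ = k := by rw [Nat.card_Icc]; omega
  have hTS : T = S := Finset.eq_of_subset_of_card_le hsub (by omega)
  have ha : u - ((3*1 : ℕ) : ZMod (3*k+1)) ∈ T := by
    rw [hTS, hS]
    exact Finset.mem_image.mpr ⟨1, Finset.mem_Icc.mpr ⟨le_refl 1, by omega⟩, rfl⟩
  have hb : u - ((3*k : ℕ) : ZMod (3*k+1)) ∈ T := by
    rw [hTS, hS]
    exact Finset.mem_image.mpr ⟨k, Finset.mem_Icc.mpr ⟨by omega, le_rfl⟩, rfl⟩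
  apply hD _ (hTI hb) _ (hTI ha) 4 h4ne (Or.inr (Or.inr rfl))
  have hz4 : ((3*k+1 : ℕ) : ZMod (3*k+1)) = 0 := by exact_mod_cast ZMod.natCast_self _
  push_cast at hz4 ⊢
  linear_combination -hz4
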